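/- For every ε ∈ (0,1) and every p ∈ [0,1], at least one of the following two inequalities holds: p + (1−p)(1 + √ε) ≤ (1/2)·(2 + √ε − ε), or 1 + √ε + (1−ε)p ≤ (3/4 + √ε)·(2 + √ε − ε). Consequently, in the two-variable instance with X_1 = 1 deterministically and X_2 = 1/ε + 1/√ε with probability ε (whose prophet value is OPT = 2 + √ε − ε), any algorithm that selects the first item with probability p when the advice is uninformative cannot simultaneously achieve ratio at least 1/2 when α = 0 and ratio strictly greater than 3/4 + √ε when α = 1. -/
import Mathlib

open MeasureTheory ProbabilityTheory

/-- `pick v t` returns `v i` for the least index `i` with `v i ≥ t`, and `0` if no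
such index exists. -/
noncomputable def pick {n : ℕ} (v : Fin n → ℝ) (t : ℝ) : ℝ :=
  if h : (Finset.univ.filter (fun i => t ≤ v i)).Nonempty then
    v ((Finset.univ.filter (fun i => t ≤ v i)).min' h)
  else 0

/-- The realized maximum `M(X)(ω) = max_i X_i(ω)` of an instance. -/
noncomputable def instMax {Ω : Type*} {n : ℕ} (X : Fin n → Ω → ℝ) (ω : Ω) : ℝ :=
  ⨆ i, X i ω

/-- `OPT(X) = E[max_i X_i]`. -/
noncomputable def OPT {Ω : Type*} {m : MeasurableSpace Ω} (μ : Measure Ω) {n : ℕ}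
    (X : Fin n → Ω → ℝ) : ℝ :=
  ∫ ω, instMax X ω ∂μ

/-- `TAL(X, τ) = E[pick((X_1,…,X_n), τ)]`: the expected value of the threshold
algorithm with threshold `τ`. -/
noncomputable def TAL {Ω : Type*} {m : MeasurableSpace Ω} (μ : Measure Ω) {n : ℕ}
    (X : Fin n → Ω → ℝ) (τ : ℝ) : ℝ :=
  ∫ ω, pick (fun i => X i ω) τ ∂μ

/-- `TAL_α(X, τ) = E[pick((X_1,…,X_n), max(τ, α·M))]`: the expected value of the
prediction-augmented threshold algorithm with base threshold `τ` and prediction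
quality `α`. -/
noncomputable def TALpred {Ω : Type*} {m : MeasurableSpace Ω} (μ : Measure Ω) (α : ℝ)
    {n : ℕ} (X : Fin n → Ω → ℝ) (τ : ℝ) : ℝ :=
  ∫ ω, pick (fun i => X i ω) (max τ (α * instMax X ω)) ∂μ

/-- The SC-threshold `η(I) = sup{τ ≥ 0 : TAL(I, τ) ≥ τ}`. -/
noncomputable def SCthreshold {Ω : Type*} {m : MeasurableSpace Ω} (μ : Measure Ω)
    {n : ℕ} (X : Fin n → Ω → ℝ) : ℝ :=
  sSup {τ : ℝ | 0 ≤ τ ∧ τ ≤ TAL μ X τ}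

/-- For every `ε ∈ (0,1)` and `p ∈ [0,1]`, at least one of the following holds:
`p + (1−p)(1+√ε) ≤ (1/2)(2+√ε−ε)` or `1+√ε+(1−ε)p ≤ (3/4+√ε)(2+√ε−ε)`; hence no
algorithm can be `1/2`-robust and strictly better than `(3/4+√ε)`-consistent on the
hard two-variable instance. -/
theorem stmt18 (ε : ℝ) (hε : ε ∈ Set.Ioo (0 : ℝ) 1) (p : ℝ) (hp : p ∈ Set.Icc (0 : ℝ) 1) :
    p + (1 - p) * (1 + Real.sqrt ε) ≤ (1 / 2) * (2 + Real.sqrt ε - ε) ∨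
    1 + Real.sqrt ε + (1 - ε) * p ≤ (3 / 4 + Real.sqrt ε) * (2 + Real.sqrt ε - ε) := by
  obtain ⟨hε0, hε1⟩ := hε
  obtain ⟨hp0, hp1⟩ := hp
  set s := Real.sqrt ε with hs
  have hs0 : 0 < s := Real.sqrt_pos.mpr hε0
  have hs2 : s * s = ε := Real.mul_self_sqrt hε0.le
  have hs1 : s < 1 := by nlinarith
  by_cases h : (1 + s) / 2 ≤ p
  · left; nlinarith
  · right; push_neg at h; nlinarith [mul_pos hs0 hs0, mul_nonneg hs0.le hp0]
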